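/- Let p be a prime and Λ = ℤ_p[[T]]. If f, g ∈ Λ satisfy f ≡ g (mod p^M Λ) for some M ≥ 1 and μ(f) < M, then μ(f) = μ(g) and λ(f) = λ(g). -/

import Mathlib

namespace Stmt2

/-- The one-variable Iwasawa algebra `Λ = ℤ_p[[T]]`. -/
abbrev Lam (p : ℕ) [Fact p.Prime] : Type := PowerSeries ℤ_[p]

/-- A distinguished polynomial: monic with all lower coefficients divisible by `p`. -/
def IsDistinguished (p : ℕ) [Fact p.Prime] (P : Polynomial ℤ_[p]) : Prop :=
  P.Monic ∧ ∀ i < P.natDegree, P.coeff i ∈ Ideal.span {(p : ℤ_[p])}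

/-- `f = p^μ · u · P` with `u ∈ Λˣ` and `P` distinguished of degree `λ`
(Weierstrass preparation); i.e. `f` has Iwasawa invariants `μ(f) = μ` and `λ(f) = lam`. -/
def IsWeierstrass (p : ℕ) [Fact p.Prime] (f : Lam p) (μ lam : ℕ) : Prop :=
  ∃ (u : (Lam p)ˣ) (P : Polynomial ℤ_[p]), IsDistinguished p P ∧ P.natDegree = lam ∧
    f = (p : Lam p) ^ μ * (u : Lam p) * (P : PowerSeries ℤ_[p])

open PowerSeries

lemma C_dvd_iff {R : Type*} [CommRing R] (a : R) (F : PowerSeries R) :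
    (PowerSeries.C a) ∣ F ↔ ∀ n, a ∣ PowerSeries.coeff n F := by
  constructor
  · rintro ⟨G, rfl⟩ n
    exact ⟨PowerSeries.coeff n G, by rw [PowerSeries.coeff_C_mul]⟩
  · intro h
    refine ⟨PowerSeries.mk fun n => (h n).choose, ?_⟩
    ext n
    rw [PowerSeries.coeff_C_mul, PowerSeries.coeff_mk]
    exact (h n).choose_spec

lemma p_eq_C (p : ℕ) [Fact p.Prime] : (p : Lam p) = PowerSeries.C (p : ℤ_[p]) :=
  (map_natCast (PowerSeries.C (R := ℤ_[p])) p).symm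

lemma toZMod_eq_zero_iff (p : ℕ) [Fact p.Prime] (x : ℤ_[p]) :
    PadicInt.toZMod x = 0 ↔ (p : ℤ_[p]) ∣ x := by
  rw [← RingHom.mem_ker, PadicInt.ker_toZMod, PadicInt.maximalIdeal_eq_span_p,
    Ideal.mem_span_singleton]

lemma map_eq_zero_iff (p : ℕ) [Fact p.Prime] (F : Lam p) :
    PowerSeries.map (PadicInt.toZMod (p := p)) F = 0 ↔ (p : Lam p) ∣ F := by
  rw [p_eq_C, C_dvd_iff]
  constructor
  · intro h n
    rw [← toZMod_eq_zero_iff]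
    have := congrArg (PowerSeries.coeff (R := ZMod p) n) h
    simpa using this
  · intro h
    ext n
    simpa using (toZMod_eq_zero_iff p _).2 (h n)

lemma map_distinguished (p : ℕ) [Fact p.Prime] (P : Polynomial ℤ_[p]) (l : ℕ)
    (hP : IsDistinguished p P) (hdeg : P.natDegree = l) :
    PowerSeries.map (PadicInt.toZMod (p := p)) (P : PowerSeries ℤ_[p]) =
      (PowerSeries.X : PowerSeries (ZMod p)) ^ l := by
  ext n
  rw [PowerSeries.coeff_map, Polynomial.coeff_coe, PowerSeries.coeff_X_pow]
  rcases lt_trichotomy n l with h | h | h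
  · rw [if_neg h.ne]
    exact (toZMod_eq_zero_iff p _).2
      (Ideal.mem_span_singleton.1 (hP.2 n (hdeg ▸ h)))
  · subst h
    rw [if_pos rfl, ← hdeg, hP.1.coeff_natDegree, map_one]
  · rw [if_neg h.ne', Polynomial.coeff_eq_zero_of_natDegree_lt (hdeg ▸ h), map_zero]

lemma not_p_dvd (p : ℕ) [Fact p.Prime] (u : (Lam p)ˣ) (P : Polynomial ℤ_[p]) (l : ℕ)
    (hP : IsDistinguished p P) (hdeg : P.natDegree = l) :
    ¬ (p : Lam p) ∣ ((u : Lam p) * (P : PowerSeries ℤ_[p])) := by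
  intro h
  rw [← map_eq_zero_iff, map_mul, map_distinguished p P l hP hdeg] at h
  exact mul_ne_zero (u.isUnit.map (PowerSeries.map (PadicInt.toZMod (p := p)))).ne_zero
    (pow_ne_zero _ PowerSeries.X_ne_zero) h

/-- If `f ≡ g (mod p^M Λ)` with `M ≥ 1` and `μ(f) < M`, then `μ(f) = μ(g)` and
`λ(f) = λ(g)`. -/
theorem iwasawa_invariants_eq_of_congruent (p : ℕ) [Fact p.Prime]
    (f g : Lam p) (M : ℕ) (hM : 1 ≤ M)
    (μf lf μg lg : ℕ) (hf : IsWeierstrass p f μf lf) (hg : IsWeierstrass p g μg lg)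
    (hcong : (p : Lam p) ^ M ∣ f - g) (hμ : μf < M) :
    μf = μg ∧ lf = lg := by
  obtain ⟨u, P, hPd, hPdeg, hfe⟩ := hf
  obtain ⟨v, Q, hQd, hQdeg, hge⟩ := hg
  have hpR : (p : ℤ_[p]) ≠ 0 := Nat.cast_ne_zero.2 (Fact.out : p.Prime).ne_zero
  have hpne : (p : Lam p) ≠ 0 := by
    rw [p_eq_C]
    exact fun h => hpR (PowerSeries.C_injective (by rw [h, map_zero]))
  have hfP : f = (p : Lam p) ^ μf * ((u : Lam p) * (P : PowerSeries ℤ_[p])) := by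
    rw [hfe, mul_assoc]
  have hgQ : g = (p : Lam p) ^ μg * ((v : Lam p) * (Q : PowerSeries ℤ_[p])) := by
    rw [hge, mul_assoc]
  have hnf := not_p_dvd p u P lf hPd hPdeg
  have hng := not_p_dvd p v Q lg hQd hQdeg
  have hμeq : μf = μg := by
    rcases lt_trichotomy μf μg with h | h | h
    · exfalso
      have h1 : (p : Lam p) ^ (μf + 1) ∣ g :=
        (pow_dvd_pow _ h).trans (hgQ ▸ Dvd.dvd.mul_right dvd_rfl _)
      have h2 : (p : Lam p) ^ (μf + 1) ∣ f - g := (pow_dvd_pow _ hμ).trans hcong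
      have h3 : (p : Lam p) ^ (μf + 1) ∣ f := by
        have := dvd_add h2 h1
        rwa [sub_add_cancel] at this
      rw [hfP, pow_succ] at h3
      exact hnf ((mul_dvd_mul_iff_left (pow_ne_zero μf hpne)).1 h3)
    · exact h
    · exfalso
      have h1 : (p : Lam p) ^ (μg + 1) ∣ f :=
        (pow_dvd_pow _ h).trans (hfP ▸ Dvd.dvd.mul_right dvd_rfl _)
      have h2 : (p : Lam p) ^ (μg + 1) ∣ f - g :=
        (pow_dvd_pow _ (h.trans hμ)).trans hcong
      have h3 : (p : Lam p) ^ (μg + 1) ∣ g := by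
        have := dvd_sub h1 h2
        rwa [sub_sub_cancel] at this
      rw [hgQ, pow_succ] at h3
      exact hng ((mul_dvd_mul_iff_left (pow_ne_zero μg hpne)).1 h3)
  refine ⟨hμeq, ?_⟩
  -- now the λ part
  have hdvd : (p : Lam p) ∣ ((u : Lam p) * (P : PowerSeries ℤ_[p]) -
      (v : Lam p) * (Q : PowerSeries ℤ_[p])) := by
    have h2 : (p : Lam p) ^ (μf + 1) ∣ f - g := (pow_dvd_pow _ hμ).trans hcong
    have hfg : f - g = (p : Lam p) ^ μf * ((u : Lam p) * (P : PowerSeries ℤ_[p]) -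
        (v : Lam p) * (Q : PowerSeries ℤ_[p])) := by
      rw [hfP, hgQ, ← hμeq, mul_sub]
    rw [hfg, pow_succ] at h2
    exact (mul_dvd_mul_iff_left (pow_ne_zero μf hpne)).1 h2
  have hmap : (PowerSeries.map (PadicInt.toZMod (p := p))) ((u : Lam p) * (P : PowerSeries ℤ_[p]))
      = (PowerSeries.map (PadicInt.toZMod (p := p))) ((v : Lam p) * (Q : PowerSeries ℤ_[p])) := by
    have := (map_eq_zero_iff p _).2 hdvd
    rw [map_sub, sub_eq_zero] at this
    exact this
  rw [map_mul, map_mul, map_distinguished p P lf hPd hPdeg,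
    map_distinguished p Q lg hQd hQdeg] at hmap
  have horder := congrArg PowerSeries.order hmap
  rw [PowerSeries.order_mul, PowerSeries.order_mul, PowerSeries.order_X_pow,
    PowerSeries.order_X_pow,
    PowerSeries.order_zero_of_unit (u.isUnit.map (PowerSeries.map (PadicInt.toZMod (p := p)))),
    PowerSeries.order_zero_of_unit (v.isUnit.map (PowerSeries.map (PadicInt.toZMod (p := p)))),
    zero_add, zero_add] at horder
  exact_mod_cast horder


end Stmt2
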